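/- Stationary phase estimate: Let F : D → ℝ be a warping function such that w = (F⁻¹)′ ∈ Cⁿ(ℝ) satisfies w(x+y) ≤ C·w(x)·w(y) for all x,y ∈ ℝ and |w^{(k)}/w| ≤ D_k for constants D_k > 0, k = 0,…,n. Let C_n > 0 be a constant such that |Dⁿ_{w,x,η}(g)(s)| ≤ C_n (w(−s)/(2π|η|))ⁿ Σ_{k=0}^n |g^{(k)}(s)| for all g ∈ Cⁿ(ℝ), s, x ∈ ℝ, η ≠ 0. Suppose f ∈ C^{n+1}(ℝ) with w·f ∈ L¹(ℝ) satisfies: f ∈ C₀(ℝ) and w(−·)^j · f^{(k+1)} ∈ C₀(ℝ) for all 0 ≤ k ≤ j ≤ n, and C_n · ∫_ℝ w(−s)ⁿ |f^{(k+1)}(s)| ds ≤ c_n < ∞ for all 0 ≤ k ≤ n. Then for all x ∈ ℝ and η ≠ 0: |∫_ℝ (w(s+x)/w(x)) · f(s) · e^{−2πiη·F⁻¹(s+x)/w(x)} ds| ≤ (n+1)·c_n/(2π|η|)^{n+1}, and moreover the left-hand side is bounded by C·∫_ℝ w(s)|f(s)| ds. -/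

import Mathlib

open MeasureTheory Filter Topology Set
open scoped ENNReal NNReal

noncomputable section

/-- A warping function `F : D → ℝ` (with `D = ℝ` or `D = (0,∞)`), bundled together with its
inverse `Finv`, its derivative `F'` and the associated weight `w = (F⁻¹)'`.  The fields record:
bijectivity of `F : D → ℝ`, `F ∈ C¹(D)` with `F' > 0`, strict decrease of `F'` in `|t|`,
`w = (F⁻¹)'`, oddness of `F` when `D = ℝ`, and `v`-moderateness of `w` for some
submultiplicative weight `v`. -/
structure Warping where
  D : Set ℝ
  F : ℝ → ℝ
  Finv : ℝ → ℝ
  F' : ℝ → ℝ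
  w : ℝ → ℝ
  hD : D = Set.univ ∨ D = Set.Ioi 0
  left_inv : ∀ x ∈ D, Finv (F x) = x
  mem_inv : ∀ s : ℝ, Finv s ∈ D
  right_inv : ∀ s : ℝ, F (Finv s) = s
  F_hasDeriv : ∀ t ∈ D, HasDerivAt F (F' t) t
  F'_cont : ContinuousOn F' D
  F'_pos : ∀ t ∈ D, 0 < F' t
  F'_dec : ∀ t₀ ∈ D, ∀ t₁ ∈ D, |t₀| < |t₁| → F' t₁ < F' t₀
  w_hasDeriv : ∀ s : ℝ, HasDerivAt Finv (w s) s
  w_pos : ∀ s : ℝ, 0 < w s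
  odd_of_univ : D = Set.univ → ∀ t, F (-t) = -F t
  moderate : ∃ (v : ℝ → ℝ) (C₀ : ℝ), (∀ x, 0 < v x) ∧ (∀ x y, v (x + y) ≤ v x * v y) ∧
      ∀ x y, w (x + y) ≤ C₀ * v x * w y

/-- The frequency-side warped atom `g_x = √(F'(x)) · (T_{F(x)}θ) ∘ F` on `D`, extended by zero. -/
def gxFun (W : Warping) (θ : ℝ → ℂ) (x : ℝ) : ℝ → ℂ :=
  W.D.indicator fun t => (Real.sqrt (W.F' x) : ℂ) * θ (W.F t - W.F x)

/-- The Fourier transform of the warped time-frequency atom `g_{x,ξ} = T_ξ (ǧ_x)`: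
`ĝ_{x,ξ}(t) = e^{-2πiξt} g_x(t)`. -/
def hatAtom (W : Warping) (θ : ℝ → ℂ) (x ξ : ℝ) : ℝ → ℂ := fun t =>
  gxFun W θ x t * Complex.exp (-(2 * Real.pi * Complex.I * ξ * t))

/-- The warped time-frequency transform `V_{θ,F} f (x,ξ) = ⟨f, g_{x,ξ}⟩`, expressed on the
Fourier side (via Plancherel) in terms of `fh = f̂`:
`V_{θ,F} f (x,ξ) = ∫ f̂(t) conj(g_x(t)) e^{2πiξt} dt`. -/
def warpedTransform (W : Warping) (θ fh : ℝ → ℂ) (x ξ : ℝ) : ℂ :=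
  ∫ t : ℝ, fh t * (starRingEnd ℂ) (gxFun W θ x t) * Complex.exp (2 * Real.pi * Complex.I * ξ * t)

/-- The operator `D_{w,x,η}`, acting on `f ∈ C¹(ℝ)` by
`D_{w,x,η}(f)(s) = (w(x)/(2πiη)) · (f / w(·+x))'(s)`. -/
def Dop (w : ℝ → ℝ) (x η : ℝ) (f : ℝ → ℂ) : ℝ → ℂ := fun s =>
  ((w x : ℂ) / (2 * Real.pi * Complex.I * η)) * deriv (fun u => f u / (w (u + x) : ℂ)) s

lemma aux_iteratedDeriv_cmul {h : ℝ → ℂ} {m : ℕ} (hh : ContDiff ℝ m h) (c : ℂ) :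
    iteratedDeriv m (fun s => c * h s) = fun s => c * iteratedDeriv m h s := by
  induction m with
  | zero => simp
  | succ m ih =>
    have hm : ContDiff ℝ m h := hh.of_le (by exact_mod_cast Nat.le_succ m)
    funext s
    rw [iteratedDeriv_succ, ih hm, iteratedDeriv_succ]
    have : DifferentiableAt ℝ (iteratedDeriv m h) s :=
      (hh.differentiable_iteratedDeriv m (by exact_mod_cast Nat.lt_succ_self m)).differentiableAt
    simpa [smul_eq_mul] using deriv_const_smul (f := iteratedDeriv m h) c this

lemma aux_iteratedDeriv_ofReal {h : ℝ → ℝ} {m : ℕ} (hh : ContDiff ℝ m h) :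
    iteratedDeriv m (fun t => ((h t : ℝ) : ℂ)) = fun t => ((iteratedDeriv m h t : ℝ) : ℂ) := by
  induction m with
  | zero => simp
  | succ m ih =>
    have hm : ContDiff ℝ m h := hh.of_le (by exact_mod_cast Nat.le_succ m)
    funext s
    rw [iteratedDeriv_succ, ih hm, iteratedDeriv_succ]
    have hd : DifferentiableAt ℝ (iteratedDeriv m h) s :=
      (hh.differentiable_iteratedDeriv m (by exact_mod_cast Nat.lt_succ_self m)).differentiableAt
    exact (hd.hasDerivAt.ofReal_comp).deriv

lemma aux_leibniz {m : ℕ} {f g : ℝ → ℝ} (hf : ContDiff ℝ m f) (hg : ContDiff ℝ m g) :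
    iteratedDeriv m (fun t => f t * g t) = fun s => ∑ i ∈ Finset.range (m+1),
      (m.choose i : ℝ) * (iteratedDeriv i f s * iteratedDeriv (m - i) g s) := by
  induction m with
  | zero => simp
  | succ m ih =>
    have hf' : ContDiff ℝ m f := hf.of_le (by exact_mod_cast Nat.le_succ m)
    have hg' : ContDiff ℝ m g := hg.of_le (by exact_mod_cast Nat.le_succ m)
    funext s
    rw [iteratedDeriv_succ, ih hf' hg']
    have hdF : ∀ i, i ≤ m → DifferentiableAt ℝ (iteratedDeriv i f) s := fun i hi =>
      (hf.differentiable_iteratedDeriv i (by exact_mod_cast Nat.lt_succ_of_le hi)).differentiableAt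
    have hdG : ∀ i, i ≤ m → DifferentiableAt ℝ (iteratedDeriv i g) s := fun i hi =>
      (hg.differentiable_iteratedDeriv i (by exact_mod_cast Nat.lt_succ_of_le hi)).differentiableAt
    rw [deriv_fun_sum (fun i hi => by
      refine DifferentiableAt.const_mul ?_ _
      exact ((hdF i (Finset.mem_range_succ_iff.mp hi)).mul
        (hdG (m - i) (Nat.sub_le m i))))]
    have hterm : ∀ i ∈ Finset.range (m+1),
        deriv (fun s => (m.choose i : ℝ) * (iteratedDeriv i f s * iteratedDeriv (m - i) g s)) s
          = (m.choose i : ℝ) * (iteratedDeriv (i+1) f s * iteratedDeriv (m - i) g s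
              + iteratedDeriv i f s * iteratedDeriv (m - i + 1) g s) := by
      intro i hi
      have hi' := Finset.mem_range_succ_iff.mp hi
      rw [deriv_const_mul _ ((hdF i hi').fun_mul (hdG (m-i) (Nat.sub_le m i))),
        deriv_fun_mul (hdF i hi') (hdG (m-i) (Nat.sub_le m i)), ← iteratedDeriv_succ,
        ← iteratedDeriv_succ]
    rw [Finset.sum_congr rfl hterm]
    -- now pure algebra with binomials
    have key : ∀ (F G : ℕ → ℝ),
        ∑ i ∈ Finset.range (m+2), ((m+1).choose i : ℝ) * (F i * G (m+1-i))
        = ∑ i ∈ Finset.range (m+1), (m.choose i : ℝ) * (F (i+1) * G (m-i)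
            + F i * G (m-i+1)) := by
      intro F G
      have h2 : ∑ i ∈ Finset.range (m+1), ((m.choose (i+1) : ℝ)) * (F (i+1) * G (m-i))
          = ∑ i ∈ Finset.range (m+1), (m.choose i : ℝ) * (F i * G (m-i+1))
            - F 0 * G (m+1) := by
        have e1 : ∑ i ∈ Finset.range (m+1), ((m.choose (i+1) : ℝ)) * (F (i+1) * G (m-i))
            = ∑ i ∈ Finset.range m, ((m.choose (i+1) : ℝ)) * (F (i+1) * G (m-i)) := by
          rw [Finset.sum_range_succ]
          simp [Nat.choose_succ_self]
        have e2 : ∑ i ∈ Finset.range (m+1), (m.choose i : ℝ) * (F i * G (m-i+1))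
            = ∑ i ∈ Finset.range m, ((m.choose (i+1) : ℝ)) * (F (i+1) * G (m-i))
              + F 0 * G (m+1) := by
          rw [Finset.sum_range_succ' (fun i => (m.choose i : ℝ) * (F i * G (m-i+1)))]
          simp only [Nat.choose_zero_right, Nat.cast_one, Nat.sub_zero, one_mul]
          congr 1
          refine Finset.sum_congr rfl ?_
          intro i hi
          have hi' : i < m := Finset.mem_range.mp hi
          have : m - (i+1) + 1 = m - i := by omega
          rw [this]
        rw [e1, e2]; ring
      rw [Finset.sum_range_succ']
      simp only [Nat.choose_succ_succ, Nat.succ_sub_succ, Nat.choose_zero_right,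
        Nat.cast_add, Nat.cast_one, Nat.sub_zero, one_mul, Nat.succ_eq_add_one]
      simp only [add_mul, mul_add, Finset.sum_add_distrib]
      rw [h2]
      ring
    exact (key (fun i => iteratedDeriv i f s) (fun i => iteratedDeriv i g s)).symm

lemma aux_iteratedDeriv_constfun (c : ℝ) (r : ℕ) : iteratedDeriv r (fun _ : ℝ => c) = fun _ => if r = 0 then c else 0 := by
  induction r with
  | zero => simp
  | succ r ih =>
    rw [iteratedDeriv_succ, ih]
    funext s
    rcases eq_or_ne r 0 with h | h <;> simp [h]

lemma aux_inv_bound {w : ℝ → ℝ} {n : ℕ} (hw : ContDiff ℝ n w) (hpos : ∀ s, 0 < w s)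
    (Dk : ℕ → ℝ) (hder : ∀ k, k ≤ n → ∀ s, |iteratedDeriv k w s| ≤ Dk k * w s) :
    ∀ r, ∃ E : ℝ, 0 ≤ E ∧ (r ≤ n → ∀ s,
      |iteratedDeriv r (fun t => (w t)⁻¹) s| ≤ E * (w s)⁻¹) := by
  have hDk : ∀ k, k ≤ n → 0 ≤ Dk k := by
    intro k hk
    have := hder k hk 0
    nlinarith [abs_nonneg (iteratedDeriv k w 0), hpos 0]
  have hpc : ContDiff ℝ n (fun t => (w t)⁻¹) := hw.inv (fun s => (hpos s).ne')
  intro r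
  induction r using Nat.strong_induction_on with
  | _ r IH =>
    rcases le_or_gt r n with hrn | hrn
    swap
    · exact ⟨0, le_rfl, fun h => absurd h (by omega)⟩
    choose Efun hEnn hEbd using IH
    rcases Nat.eq_zero_or_pos r with rfl | hr
    · exact ⟨1, zero_le_one, fun _ s => by
        rw [iteratedDeriv_zero, one_mul, abs_of_pos (inv_pos.mpr (hpos s))]⟩
    obtain ⟨r', rfl⟩ : ∃ r', r = r' + 1 := ⟨r - 1, by omega⟩
    set p : ℝ → ℝ := fun t => (w t)⁻¹ with hp
    refine ⟨∑ i ∈ Finset.range (r'+1), ((r'+1).choose (i+1) : ℝ) * (Dk (i+1) *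
      Efun (r'+1-(i+1)) (by omega)), ?_, fun _ s => ?_⟩
    · refine Finset.sum_nonneg fun i hi => ?_
      have hi' : i < r' + 1 := Finset.mem_range.mp hi
      exact mul_nonneg (Nat.cast_nonneg _) (mul_nonneg (hDk _ (by omega)) (hEnn _ _))
    · have hLeib := congrFun (aux_leibniz (m := r'+1) (f := w) (g := p)
        (hw.of_le (by exact_mod_cast hrn)) (hpc.of_le (by exact_mod_cast hrn))) s
      have hone : (fun t => w t * p t) = fun _ : ℝ => (1:ℝ) :=
        funext fun t => mul_inv_cancel₀ (hpos t).ne'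
      rw [hone, aux_iteratedDeriv_constfun] at hLeib
      simp only [Nat.succ_ne_zero, if_false] at hLeib
      rw [Finset.sum_range_succ'] at hLeib
      simp only [Nat.choose_zero_right, Nat.cast_one, one_mul, Nat.sub_zero,
        iteratedDeriv_zero] at hLeib
      have h0 : w s * iteratedDeriv (r'+1) p s
          = -∑ i ∈ Finset.range (r'+1), ((r'+1).choose (i+1) : ℝ) *
              (iteratedDeriv (i+1) w s * iteratedDeriv (r'+1-(i+1)) p s) := by
        rw [eq_neg_iff_add_eq_zero]
        linarith [hLeib]
      have hws := hpos s
      have habs : |w s * iteratedDeriv (r'+1) p s|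
          ≤ ∑ i ∈ Finset.range (r'+1), ((r'+1).choose (i+1) : ℝ) * (Dk (i+1) *
              Efun (r'+1-(i+1)) (by omega)) := by
        rw [h0, abs_neg]
        refine le_trans (Finset.abs_sum_le_sum_abs _ _) (Finset.sum_le_sum ?_)
        intro i hi
        have hi' : i < r' + 1 := Finset.mem_range.mp hi
        rw [abs_mul, abs_mul, Nat.abs_cast]
        refine mul_le_mul_of_nonneg_left ?_ (Nat.cast_nonneg _)
        have hb1 : |iteratedDeriv (i+1) w s| ≤ Dk (i+1) * w s := hder (i+1) (by omega) s
        have hb2 : |iteratedDeriv (r'+1-(i+1)) p s|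
            ≤ Efun (r'+1-(i+1)) (by omega) * (w s)⁻¹ :=
          hEbd (r'+1-(i+1)) (by omega) (by omega) s
        calc |iteratedDeriv (i+1) w s| * |iteratedDeriv (r'+1-(i+1)) p s|
            ≤ (Dk (i+1) * w s) * (Efun (r'+1-(i+1)) (by omega) * (w s)⁻¹) :=
              mul_le_mul hb1 hb2 (abs_nonneg _) (mul_nonneg (hDk _ (by omega)) hws.le)
          _ = Dk (i+1) * Efun (r'+1-(i+1)) (by omega) * (w s * (w s)⁻¹) := by ring
          _ = Dk (i+1) * Efun (r'+1-(i+1)) (by omega) := by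
              rw [mul_inv_cancel₀ hws.ne', mul_one]
      rw [abs_mul, abs_of_pos hws] at habs
      calc |iteratedDeriv (r'+1) p s|
          = (w s * |iteratedDeriv (r'+1) p s|) * (w s)⁻¹ := by
            field_simp
        _ ≤ (∑ i ∈ Finset.range (r'+1), ((r'+1).choose (i+1) : ℝ) * (Dk (i+1) *
              Efun (r'+1-(i+1)) (by omega))) * (w s)⁻¹ :=
            mul_le_mul_of_nonneg_right habs (by positivity)

lemma aux_g_props {w : ℝ → ℝ} {n : ℕ} (hw : ContDiff ℝ n w) (hpos : ∀ s, 0 < w s)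
    {C : ℝ} (hC : ∀ x y, w (x + y) ≤ C * w x * w y)
    (Dk : ℕ → ℝ) (hder : ∀ k, k ≤ n → ∀ s, |iteratedDeriv k w s| ≤ Dk k * w s)
    {f : ℝ → ℂ} (hf : ContDiff ℝ (n + 1) f) (x η : ℝ) :
    ∀ k, k ≤ n →
      ContDiff ℝ ((n - k : ℕ)) ((Dop w x η)^[k] (deriv f)) ∧
      ∃ E : ℝ, 0 ≤ E ∧ ∀ m, m ≤ n - k → ∀ s,
        ‖iteratedDeriv m ((Dop w x η)^[k] (deriv f)) s‖ ≤
          E * w (-s) ^ k * ∑ j ∈ Finset.range (k + m + 1), ‖iteratedDeriv (j + 1) f s‖ := by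
  have hCpos : 0 < C := by
    have := hC 0 0
    simp only [add_zero] at this
    nlinarith [hpos 0, mul_pos (hpos 0) (hpos 0)]
  have hinvw : ∀ s : ℝ, (w (s + x))⁻¹ ≤ C * w (-s) * (w x)⁻¹ := by
    intro s
    have h1 : w x ≤ C * w (s + x) * w (-s) := by
      have := hC (s + x) (-s)
      simpa using this
    have key : (w (s + x))⁻¹ = w x * ((w (s + x))⁻¹ * (w x)⁻¹) := by
      rw [show w x * ((w (s + x))⁻¹ * (w x)⁻¹)
          = (w (s + x))⁻¹ * (w x * (w x)⁻¹) from by ring,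
        mul_inv_cancel₀ (hpos x).ne', mul_one]
    have key2 : C * w (-s) * (w x)⁻¹
        = (C * w (s + x) * w (-s)) * ((w (s + x))⁻¹ * (w x)⁻¹) := by
      rw [show (C * w (s + x) * w (-s)) * ((w (s + x))⁻¹ * (w x)⁻¹)
          = C * w (-s) * (w x)⁻¹ * (w (s + x) * (w (s + x))⁻¹) from by ring,
        mul_inv_cancel₀ (hpos (s + x)).ne', mul_one]
    rw [key, key2]
    exact mul_le_mul_of_nonneg_right h1
      (mul_nonneg (inv_nonneg.mpr (hpos _).le) (inv_nonneg.mpr (hpos x).le))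
  -- inverse derivative bounds
  obtain ⟨Einv, hEinv⟩ : ∃ Einv : ℕ → ℝ, ∀ r, 0 ≤ Einv r ∧ (r ≤ n → ∀ s,
      |iteratedDeriv r (fun t => (w t)⁻¹) s| ≤ Einv r * (w s)⁻¹) := by
    choose Einv h1 h2 using aux_inv_bound hw hpos Dk hder
    exact ⟨Einv, fun r => ⟨h1 r, h2 r⟩⟩
  have hEinv0 : ∀ r, 0 ≤ Einv r := fun r => (hEinv r).1
  have hEinvb := fun r => (hEinv r).2
  -- derivative of f
  have hdf : ContDiff ℝ (n : ℕ) (deriv f) := by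
    have : ContDiff ℝ ((n : WithTop ℕ∞) + 1) f := by exact_mod_cast hf
    exact (contDiff_succ_iff_deriv.mp this).2.2
  -- the translated inverse weight, complexified
  set qi : ℝ → ℂ := fun u => (((w (u + x))⁻¹ : ℝ) : ℂ) with hqi
  have hwshift : ContDiff ℝ (n : ℕ) (fun u : ℝ => w (u + x)) :=
    hw.comp (contDiff_id.add contDiff_const)
  have hqiC : ContDiff ℝ (n : ℕ) qi := by
    exact Complex.ofRealCLM.contDiff.comp (hwshift.inv (fun u => (hpos (u + x)).ne'))
  have hqibound : ∀ r, r ≤ n → ∀ s, ‖iteratedDeriv r qi s‖ ≤ Einv r * (C * w (-s) * (w x)⁻¹) := by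
    intro r hr s
    have h1 : iteratedDeriv r qi = fun t => ((iteratedDeriv r (fun u => (w (u + x))⁻¹) t : ℝ) : ℂ) := by
      apply aux_iteratedDeriv_ofReal
      exact (hwshift.inv (fun u => (hpos (u + x)).ne')).of_le (by exact_mod_cast hr)
    have h2 : iteratedDeriv r (fun u : ℝ => (w (u + x))⁻¹) s
        = iteratedDeriv r (fun t : ℝ => (w t)⁻¹) (s + x) := by
      have := iteratedDeriv_comp_add_const r (fun t : ℝ => (w t)⁻¹) x
      exact congrFun this s
    rw [h1]
    simp only [Complex.norm_real]
    rw [h2]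
    calc |iteratedDeriv r (fun t : ℝ => (w t)⁻¹) (s + x)|
        ≤ Einv r * (w (s + x))⁻¹ := hEinvb r hr (s + x)
      _ ≤ Einv r * (C * w (-s) * (w x)⁻¹) :=
          mul_le_mul_of_nonneg_left (hinvw s) (hEinv0 r)
  -- rewrite Dop as multiplication
  have hDop : ∀ g : ℝ → ℂ, Dop w x η g
      = fun s => ((w x : ℂ) / (2 * (Real.pi : ℂ) * Complex.I * (η : ℂ))) *
          deriv (fun u => g u * qi u) s := by
    intro g
    funext s
    simp only [Dop]
    congr 2
    funext u
    simp only [hqi, div_eq_mul_inv, Complex.ofReal_inv]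
  set c : ℂ := (w x : ℂ) / (2 * (Real.pi : ℂ) * Complex.I * (η : ℂ)) with hc
  -- main induction
  intro k
  induction k with
  | zero =>
    intro _
    constructor
    · simpa using hdf
    · refine ⟨1, zero_le_one, fun m hm s => ?_⟩
      have h1 : iteratedDeriv m (deriv f) s = iteratedDeriv (m + 1) f s := by
        rw [iteratedDeriv_succ']
      simp only [Function.iterate_zero, id_eq, h1, pow_zero, mul_one, one_mul]
      refine Finset.single_le_sum (f := fun j => ‖iteratedDeriv (j + 1) f s‖)
        (fun j _ => norm_nonneg _) ?_
      simp only [Finset.mem_range]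
      omega
  | succ k ih =>
    intro hk1
    have hk : k ≤ n := by omega
    obtain ⟨hgs, E, hE0, hEb⟩ := ih hk
    set g : ℝ → ℂ := (Dop w x η)^[k] (deriv f) with hg
    have hsucc : (Dop w x η)^[k + 1] (deriv f)
        = fun s => c * deriv (fun u => g u * qi u) s := by
      rw [Function.iterate_succ_apply', ← hg, hDop g]
    have hGsm : ContDiff ℝ ((n - k : ℕ)) (fun u => g u * qi u) :=
      hgs.mul (hqiC.of_le (by exact_mod_cast Nat.sub_le n k))
    have hcast : ((n - k : ℕ) : WithTop ℕ∞) = ((n - (k + 1) : ℕ) : WithTop ℕ∞) + 1 := by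
      have : n - k = (n - (k + 1)) + 1 := by omega
      rw [this]
      push_cast
      rfl
    have hderivG : ContDiff ℝ ((n - (k + 1) : ℕ)) (deriv (fun u => g u * qi u)) := by
      rw [hcast] at hGsm
      exact (contDiff_succ_iff_deriv.mp hGsm).2.2
    have hsmooth : ContDiff ℝ ((n - (k + 1) : ℕ)) ((Dop w x η)^[k + 1] (deriv f)) := by
      rw [hsucc]
      exact contDiff_const.mul hderivG
    refine ⟨hsmooth, ?_⟩
    -- the new constant
    set EinvS : ℝ := ∑ r ∈ Finset.range (n + 1), Einv r with hEinvS
    have hEinvS0 : 0 ≤ EinvS := Finset.sum_nonneg fun r _ => hEinv0 r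
    have hEinvSb : ∀ r, r ≤ n → Einv r ≤ EinvS := by
      intro r hr
      exact Finset.single_le_sum (f := fun r => Einv r) (fun i _ => hEinv0 i)
        (Finset.mem_range.mpr (by omega))
    refine ⟨‖c‖ * ((n + 2) * 2 ^ (n + 1) * EinvS * E * C * (w x)⁻¹), ?_, ?_⟩
    · exact mul_nonneg (norm_nonneg _) (mul_nonneg (mul_nonneg (mul_nonneg (mul_nonneg
        (by positivity) hEinvS0) hE0) hCpos.le) (inv_nonneg.mpr (hpos x).le))
    intro m hm s
    have hm1 : m + 1 ≤ n - k := by omega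
    -- rewrite the iterated derivative
    have e1 : iteratedDeriv m ((Dop w x η)^[k + 1] (deriv f)) s
        = c * iteratedDeriv (m + 1) (fun u => g u * qi u) s := by
      rw [hsucc]
      have := aux_iteratedDeriv_cmul (m := m)
        (hderivG.of_le (by exact_mod_cast hm)) c
      rw [this]
      rw [← iteratedDeriv_succ']
    rw [e1, norm_mul]
    -- Leibniz bound
    have hmul : ‖iteratedDeriv (m + 1) (fun u => g u * qi u) s‖
        ≤ ∑ i ∈ Finset.range (m + 2), ((m + 1).choose i : ℝ) *
            ‖iteratedDeriv i g s‖ * ‖iteratedDeriv (m + 1 - i) qi s‖ := by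
      have h := norm_iteratedFDeriv_mul_le (𝕜 := ℝ) (N := ((n - k : ℕ) : WithTop ℕ∞))
        hgs (hqiC.of_le (by exact_mod_cast Nat.sub_le n k))
        s (n := m + 1) (by exact_mod_cast hm1)
      calc ‖iteratedDeriv (m + 1) (fun u => g u * qi u) s‖
          = ‖iteratedFDeriv ℝ (m + 1) (fun u => g u * qi u) s‖ :=
            (norm_iteratedFDeriv_eq_norm_iteratedDeriv).symm
        _ ≤ ∑ i ∈ Finset.range (m + 2), ((m + 1).choose i : ℝ) *
            ‖iteratedFDeriv ℝ i g s‖ * ‖iteratedFDeriv ℝ (m + 1 - i) qi s‖ := h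
        _ = ∑ i ∈ Finset.range (m + 2), ((m + 1).choose i : ℝ) *
            ‖iteratedDeriv i g s‖ * ‖iteratedDeriv (m + 1 - i) qi s‖ := by
            refine Finset.sum_congr rfl fun i _ => ?_
            rw [norm_iteratedFDeriv_eq_norm_iteratedDeriv,
              norm_iteratedFDeriv_eq_norm_iteratedDeriv]
    set Sv : ℝ := ∑ j ∈ Finset.range (k + 1 + m + 1), ‖iteratedDeriv (j + 1) f s‖ with hSv
    have hSv0 : 0 ≤ Sv := Finset.sum_nonneg fun j _ => norm_nonneg _
    have hEwS0 : 0 ≤ E * w (-s) ^ k * Sv :=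
      mul_nonneg (mul_nonneg hE0 (pow_nonneg (hpos _).le k)) hSv0
    have hterm : ∀ i ∈ Finset.range (m + 2),
        ((m + 1).choose i : ℝ) * ‖iteratedDeriv i g s‖ * ‖iteratedDeriv (m + 1 - i) qi s‖
        ≤ 2 ^ (n + 1) * (E * w (-s) ^ k * Sv) * (EinvS * (C * w (-s) * (w x)⁻¹)) := by
      intro i hi
      have hi' : i < m + 2 := Finset.mem_range.mp hi
      have b1 : ‖iteratedDeriv i g s‖ ≤ E * w (-s) ^ k * Sv := by
        refine le_trans (hEb i (by omega) s) ?_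
        refine mul_le_mul_of_nonneg_left ?_
          (mul_nonneg hE0 (pow_nonneg (hpos _).le k))
        refine Finset.sum_le_sum_of_subset_of_nonneg
          (Finset.range_subset_range.mpr (by omega)) (fun j _ _ => norm_nonneg _)
      have b2 : ‖iteratedDeriv (m + 1 - i) qi s‖ ≤ EinvS * (C * w (-s) * (w x)⁻¹) := by
        refine le_trans (hqibound (m + 1 - i) (by omega) s) ?_
        exact mul_le_mul_of_nonneg_right (hEinvSb _ (by omega))
          (mul_nonneg (mul_nonneg hCpos.le (hpos _).le) (inv_nonneg.mpr (hpos x).le))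
      have b3 : ((m + 1).choose i : ℝ) ≤ 2 ^ (n + 1) := by
        have h1 : (m + 1).choose i ≤ 2 ^ (m + 1) := by
          calc (m + 1).choose i ≤ ∑ j ∈ Finset.range (m + 2), (m + 1).choose j :=
                Finset.single_le_sum (f := fun j => (m + 1).choose j)
                  (fun j _ => Nat.zero_le _) hi
            _ = 2 ^ (m + 1) := Nat.sum_range_choose (m + 1)
        calc ((m + 1).choose i : ℝ) ≤ ((2 ^ (m + 1) : ℕ) : ℝ) := by exact_mod_cast h1
          _ ≤ 2 ^ (n + 1) := by
              push_cast
              exact pow_le_pow_right₀ one_le_two (by omega)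
      have step1 : ((m + 1).choose i : ℝ) * ‖iteratedDeriv i g s‖
          ≤ 2 ^ (n + 1) * (E * w (-s) ^ k * Sv) :=
        mul_le_mul b3 b1 (norm_nonneg _) (by positivity)
      exact mul_le_mul step1 b2 (norm_nonneg _)
        (mul_nonneg (by positivity) hEwS0)
    have main : ‖iteratedDeriv (m + 1) (fun u => g u * qi u) s‖
        ≤ ((n : ℝ) + 2) * 2 ^ (n + 1) * EinvS * E * C * (w x)⁻¹ *
          (w (-s) ^ (k + 1) * Sv) := by
      calc ‖iteratedDeriv (m + 1) (fun u => g u * qi u) s‖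
          ≤ ∑ i ∈ Finset.range (m + 2), ((m + 1).choose i : ℝ) *
              ‖iteratedDeriv i g s‖ * ‖iteratedDeriv (m + 1 - i) qi s‖ := hmul
        _ ≤ ∑ _i ∈ Finset.range (m + 2),
              2 ^ (n + 1) * (E * w (-s) ^ k * Sv) * (EinvS * (C * w (-s) * (w x)⁻¹)) :=
            Finset.sum_le_sum hterm
        _ = ((m : ℝ) + 2) *
              (2 ^ (n + 1) * (E * w (-s) ^ k * Sv) * (EinvS * (C * w (-s) * (w x)⁻¹))) := by
            rw [Finset.sum_const, Finset.card_range, nsmul_eq_mul]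
            push_cast
            ring
        _ ≤ ((n : ℝ) + 2) *
              (2 ^ (n + 1) * (E * w (-s) ^ k * Sv) * (EinvS * (C * w (-s) * (w x)⁻¹))) := by
            refine mul_le_mul_of_nonneg_right ?_ ?_
            · have : (m : ℝ) ≤ (n : ℝ) := by exact_mod_cast (by omega : m ≤ n)
              linarith
            · refine mul_nonneg (mul_nonneg (by positivity) hEwS0) ?_
              exact mul_nonneg hEinvS0
                (mul_nonneg (mul_nonneg hCpos.le (hpos _).le) (inv_nonneg.mpr (hpos x).le))
        _ = ((n : ℝ) + 2) * 2 ^ (n + 1) * EinvS * E * C * (w x)⁻¹ *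
              (w (-s) ^ (k + 1) * Sv) := by
            rw [pow_succ]
            ring
    calc ‖c‖ * ‖iteratedDeriv (m + 1) (fun u => g u * qi u) s‖
        ≤ ‖c‖ * (((n : ℝ) + 2) * 2 ^ (n + 1) * EinvS * E * C * (w x)⁻¹ *
            (w (-s) ^ (k + 1) * Sv)) := mul_le_mul_of_nonneg_left main (norm_nonneg _)
      _ = ‖c‖ * (((n : ℝ) + 2) * 2 ^ (n + 1) * EinvS * E * C * (w x)⁻¹) *
            w (-s) ^ (k + 1) * Sv := by ring

/-- **Stationary phase estimate.** Let `F : D → ℝ` be a warping function such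
that `w = (F⁻¹)' ∈ Cⁿ(ℝ)` satisfies `w(x+y) ≤ C w(x) w(y)` and `|w^{(k)}/w| ≤ D_k` for
`k = 0,…,n`.  Let `C_n > 0` be a constant such that
`|Dⁿ_{w,x,η}(g)(s)| ≤ C_n (w(−s)/(2π|η|))ⁿ Σ_{k=0}^n |g^{(k)}(s)|` for all `g ∈ Cⁿ(ℝ)`.
Suppose `f ∈ C^{n+1}(ℝ)` with `w·f ∈ L¹(ℝ)`, `f ∈ C₀(ℝ)`,
`w(−·)^j f^{(k+1)} ∈ C₀(ℝ)` for `0 ≤ k ≤ j ≤ n`, and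
`C_n ∫ w(−s)ⁿ |f^{(k+1)}(s)| ds ≤ c_n < ∞` for all `0 ≤ k ≤ n`.  Then for all `x` and `η ≠ 0`,
`|∫ (w(s+x)/w(x)) f(s) e^{−2πiη F⁻¹(s+x)/w(x)} ds| ≤ (n+1) c_n/(2π|η|)^{n+1}`,
and the left-hand side is also bounded by `C ∫ w(s)|f(s)| ds`. -/
theorem stationary_phase_estimate
    (W : Warping) (n : ℕ) (C : ℝ)
    (hw : ContDiff ℝ n W.w)
    (hwsub : ∀ x y : ℝ, W.w (x + y) ≤ C * W.w x * W.w y)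
    (Dk : ℕ → ℝ) (hDkpos : ∀ k ≤ n, 0 < Dk k)
    (hder : ∀ k ≤ n, ∀ s : ℝ, |iteratedDeriv k W.w s / W.w s| ≤ Dk k)
    (Cn : ℝ) (hCn : 0 < Cn)
    (hCnbound : ∀ g : ℝ → ℂ, ContDiff ℝ n g → ∀ s x η : ℝ, η ≠ 0 →
      ‖(Dop W.w x η)^[n] g s‖ ≤
        Cn * (W.w (-s) / (2 * Real.pi * |η|)) ^ n *
          ∑ k ∈ Finset.range (n + 1), ‖iteratedDeriv k g s‖)
    (f : ℝ → ℂ) (hf : ContDiff ℝ (n + 1) f)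
    (hfL1 : Integrable (fun s : ℝ => W.w s • f s) volume)
    (hfC0 : Tendsto f (cocompact ℝ) (nhds 0))
    (hfdC0 : ∀ j ≤ n, ∀ k ≤ j,
      Tendsto (fun s : ℝ => (W.w (-s)) ^ j • iteratedDeriv (k + 1) f s) (cocompact ℝ) (nhds 0))
    (cn : ℝ)
    (hint : ∀ k ≤ n, Integrable (fun s : ℝ => W.w (-s) ^ n * ‖iteratedDeriv (k + 1) f s‖) volume)
    (hcn : ∀ k ≤ n, Cn * (∫ s : ℝ, W.w (-s) ^ n * ‖iteratedDeriv (k + 1) f s‖) ≤ cn)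
    (x η : ℝ) (hη : η ≠ 0) :
    ‖∫ s : ℝ, ((W.w (s + x) / W.w x : ℝ) : ℂ) * f s *
        Complex.exp (-(2 * Real.pi * Complex.I * η * ((W.Finv (s + x) / W.w x : ℝ) : ℂ)))‖ ≤
      (n + 1) * cn / (2 * Real.pi * |η|) ^ (n + 1) ∧
    ‖∫ s : ℝ, ((W.w (s + x) / W.w x : ℝ) : ℂ) * f s *
        Complex.exp (-(2 * Real.pi * Complex.I * η * ((W.Finv (s + x) / W.w x : ℝ) : ℂ)))‖ ≤
      C * ∫ s : ℝ, W.w s * ‖f s‖ := by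
  -- ## Preliminaries
  have hpos := W.w_pos
  have hCpos : 0 < C := by
    have := hwsub 0 0
    simp only [add_zero] at this
    nlinarith [hpos 0, mul_pos (hpos 0) (hpos 0)]
  have hder2 : ∀ k, k ≤ n → ∀ s, |iteratedDeriv k W.w s| ≤ Dk k * W.w s := by
    intro k hk s
    have h := hder k hk s
    rwa [abs_div, abs_of_pos (hpos s), div_le_iff₀ (hpos s)] at h
  have hinvw : ∀ s : ℝ, (W.w (s + x))⁻¹ ≤ C * W.w (-s) * (W.w x)⁻¹ := by
    intro s
    have h1 : W.w x ≤ C * W.w (s + x) * W.w (-s) := by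
      have := hwsub (s + x) (-s)
      simpa using this
    have key : (W.w (s + x))⁻¹ = W.w x * ((W.w (s + x))⁻¹ * (W.w x)⁻¹) := by
      rw [show W.w x * ((W.w (s + x))⁻¹ * (W.w x)⁻¹)
          = (W.w (s + x))⁻¹ * (W.w x * (W.w x)⁻¹) from by ring,
        mul_inv_cancel₀ (hpos x).ne', mul_one]
    have key2 : C * W.w (-s) * (W.w x)⁻¹
        = (C * W.w (s + x) * W.w (-s)) * ((W.w (s + x))⁻¹ * (W.w x)⁻¹) := by
      rw [show (C * W.w (s + x) * W.w (-s)) * ((W.w (s + x))⁻¹ * (W.w x)⁻¹)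
          = C * W.w (-s) * (W.w x)⁻¹ * (W.w (s + x) * (W.w (s + x))⁻¹) from by ring,
        mul_inv_cancel₀ (hpos (s + x)).ne', mul_one]
    rw [key, key2]
    exact mul_le_mul_of_nonneg_right h1
      (mul_nonneg (inv_nonneg.mpr (hpos _).le) (inv_nonneg.mpr (hpos x).le))
  have hdf : ContDiff ℝ (n : ℕ) (deriv f) := by
    have : ContDiff ℝ ((n : WithTop ℕ∞) + 1) f := by exact_mod_cast hf
    exact (contDiff_succ_iff_deriv.mp this).2.2
  set β : ℂ := 2 * (Real.pi : ℂ) * Complex.I * (η : ℂ) with hβdef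
  have hβ : β ≠ 0 := by
    rw [hβdef]
    refine mul_ne_zero (mul_ne_zero (mul_ne_zero two_ne_zero ?_) Complex.I_ne_zero) ?_
    · exact Complex.ofReal_ne_zero.mpr Real.pi_ne_zero
    · exact Complex.ofReal_ne_zero.mpr hη
  have hβnorm : ‖β‖ = 2 * Real.pi * |η| := by
    rw [hβdef, norm_mul, norm_mul, norm_mul, Complex.norm_I]
    simp only [Complex.norm_real, Real.norm_eq_abs, Complex.norm_ofNat]
    rw [abs_of_pos Real.pi_pos]
    ring
  set c : ℂ := (W.w x : ℂ) / β with hcdef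
  set φ : ℝ → ℂ := fun s => Complex.exp (-(β * ((W.Finv (s + x) / W.w x : ℝ) : ℂ)))
    with hφdef
  set u : ℝ → ℂ := fun s => ((W.w (s + x) / W.w x : ℝ) : ℂ) * f s *
    Complex.exp (-(β * ((W.Finv (s + x) / W.w x : ℝ) : ℂ))) with hudef
  have huφ : ∀ s, u s = ((W.w (s + x) / W.w x : ℝ) : ℂ) * f s * φ s := fun s => rfl
  have hφnorm : ∀ s, ‖φ s‖ = 1 := by
    intro s
    rw [hφdef]
    simp only [Complex.norm_exp]
    have hre : (-(β * ((W.Finv (s + x) / W.w x : ℝ) : ℂ))).re = 0 := by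
      simp [hβdef, Complex.mul_re, Complex.mul_im]
    rw [hre, Real.exp_zero]
  -- derivative of the phase
  have hFinvd : ∀ s : ℝ, HasDerivAt (fun s => W.Finv (s + x)) (W.w (s + x)) s :=
    fun s => HasDerivAt.comp_add_const s x (W.w_hasDeriv (s + x))
  have hφd : ∀ s, HasDerivAt φ (-(β * ((W.w (s + x) / W.w x : ℝ) : ℂ)) * φ s) s := by
    intro s
    have h1 : HasDerivAt (fun s => W.Finv (s + x) / W.w x) (W.w (s + x) / W.w x) s :=
      (hFinvd s).div_const _
    have h2 : HasDerivAt (fun s => ((W.Finv (s + x) / W.w x : ℝ) : ℂ))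
        ((W.w (s + x) / W.w x : ℝ) : ℂ) s := h1.ofReal_comp
    have h3 : HasDerivAt (fun s => -(β * ((W.Finv (s + x) / W.w x : ℝ) : ℂ)))
        (-(β * ((W.w (s + x) / W.w x : ℝ) : ℂ))) s := (h2.const_mul β).neg
    have h4 := h3.cexp
    rw [hφdef]
    convert h4 using 1
    ring
  -- the iterates
  have props := aux_g_props hw hpos hwsub Dk hder2 hf x η
  set g : ℕ → ℝ → ℂ := fun k => (Dop W.w x η)^[k] (deriv f) with hgdef
  set d : ℕ → ℝ → ℂ := fun k u => g k u / ((W.w (u + x) : ℝ) : ℂ) with hddef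
  have hg0 : ∀ s, g 0 s = deriv f s := fun s => rfl
  have hgsucc : ∀ k s, g (k + 1) s = c * deriv (d k) s := by
    intro k s
    have : g (k + 1) = Dop W.w x η (g k) := by
      rw [hgdef]
      exact Function.iterate_succ_apply' _ _ _
    rw [this]
    rfl
  have hdk_d : ∀ k, k < n → ∀ s, HasDerivAt (d k) (deriv (d k) s) s := by
    intro k hk s
    have h1 : ContDiff ℝ ((n - k : ℕ)) (g k) := (props k hk.le).1
    have h1' : Differentiable ℝ (g k) := by
      refine h1.differentiable ?_
      have : (1 : ℕ) ≤ n - k := by omega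
      exact_mod_cast (Nat.one_le_iff_ne_zero.mp this)
    have h2 : Differentiable ℝ (fun u : ℝ => ((W.w (u + x) : ℝ) : ℂ)) := by
      refine Complex.ofRealCLM.differentiable.comp ?_
      refine ((hw.differentiable ?_).comp (differentiable_id.add_const x))
      have : (1 : ℕ) ≤ n := by omega
      exact_mod_cast (Nat.one_le_iff_ne_zero.mp this)
    have h3 : DifferentiableAt ℝ (d k) s := by
      rw [hddef]
      exact (h1' s).div (h2 s) (Complex.ofReal_ne_zero.mpr (hpos _).ne')
    exact h3.hasDerivAt
  -- the auxiliary function G and its derivative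
  set G : ℝ → ℂ := fun s => f s * φ s + c * ∑ k ∈ Finset.range n, d k s * φ s with hGdef
  have hwsxne : ∀ s : ℝ, ((W.w (s + x) : ℝ) : ℂ) ≠ 0 :=
    fun s => Complex.ofReal_ne_zero.mpr (hpos _).ne'
  have hwxne : ((W.w x : ℝ) : ℂ) ≠ 0 := Complex.ofReal_ne_zero.mpr (hpos x).ne'
  have hGd : ∀ s, HasDerivAt G (g n s * φ s - β * u s) s := by
    intro s
    have hfd : HasDerivAt f (deriv f s) s := by
      refine (hf.differentiable ?_ s).hasDerivAt
      have : (1 : ℕ) ≤ n + 1 := by omega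
      simp
    have hfφ : HasDerivAt (fun s => f s * φ s)
        (deriv f s * φ s + f s * (-(β * ((W.w (s + x) / W.w x : ℝ) : ℂ)) * φ s)) s :=
      hfd.mul (hφd s)
    have hsum : HasDerivAt (fun s => ∑ k ∈ Finset.range n, d k s * φ s)
        (∑ k ∈ Finset.range n, (deriv (d k) s * φ s +
          d k s * (-(β * ((W.w (s + x) / W.w x : ℝ) : ℂ)) * φ s))) s :=
      HasDerivAt.fun_sum (fun k hk => (hdk_d k (Finset.mem_range.mp hk) s).mul (hφd s))
    have hG := hfφ.add (hsum.const_mul c)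
    have key : deriv f s * φ s + f s * (-(β * ((W.w (s + x) / W.w x : ℝ) : ℂ)) * φ s) +
        c * ∑ k ∈ Finset.range n, (deriv (d k) s * φ s +
          d k s * (-(β * ((W.w (s + x) / W.w x : ℝ) : ℂ)) * φ s))
        = g n s * φ s - β * u s := by
      have htel : ∀ k ∈ Finset.range n,
          c * (deriv (d k) s * φ s +
            d k s * (-(β * ((W.w (s + x) / W.w x : ℝ) : ℂ)) * φ s))
          = g (k + 1) s * φ s - g k s * φ s := by
        intro k _
        rw [hgsucc k s]
        have hdks : d k s = g k s / ((W.w (s + x) : ℝ) : ℂ) := rfl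
        rw [hdks, hcdef, Complex.ofReal_div]
        field_simp [hwsxne s, hwxne, hβ]
        ring
      rw [Finset.mul_sum, Finset.sum_congr rfl htel,
        Finset.sum_range_sub (fun k => g k s * φ s), hg0 s, huφ s, Complex.ofReal_div]
      ring
    rw [← key]
    exact hG
  -- integrability of u
  have hFinvc : Continuous W.Finv := by
    have : Differentiable ℝ W.Finv := fun s => (W.w_hasDeriv s).differentiableAt
    exact this.continuous
  have hwcont : Continuous W.w := hw.continuous
  have hφcont : Continuous φ := by
    rw [hφdef]
    exact Complex.continuous_exp.comp
      ((continuous_const.mul (Complex.continuous_ofReal.comp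
        ((hFinvc.comp (continuous_id.add continuous_const)).div_const _))).neg)
  have hucont : Continuous u := by
    rw [hudef]
    exact ((Complex.continuous_ofReal.comp
      ((hwcont.comp (continuous_id.add continuous_const)).div_const _)).mul
        hf.continuous).mul hφcont
  have hbound_int : Integrable (fun s => C * (W.w s * ‖f s‖)) volume := by
    have h1 := (hfL1.norm).const_mul C
    refine h1.congr (Filter.Eventually.of_forall fun s => ?_)
    show C * ‖W.w s • f s‖ = C * (W.w s * ‖f s‖)
    rw [norm_smul, Real.norm_eq_abs, abs_of_pos (hpos s)]
  have hunorm : ∀ s, ‖u s‖ = W.w (s + x) / W.w x * ‖f s‖ := by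
    intro s
    rw [huφ s, norm_mul, norm_mul, hφnorm, mul_one, Complex.norm_real,
      Real.norm_eq_abs, abs_of_pos (div_pos (hpos _) (hpos x))]
  have hule : ∀ s, ‖u s‖ ≤ C * (W.w s * ‖f s‖) := by
    intro s
    rw [hunorm s, div_mul_eq_mul_div, div_le_iff₀ (hpos x)]
    have h1 : W.w (s + x) ≤ C * W.w s * W.w x := hwsub s x
    nlinarith [mul_le_mul_of_nonneg_right h1 (norm_nonneg (f s)), norm_nonneg (f s),
      hpos (s + x), hpos x]
  have hu_int : Integrable u volume :=
    hbound_int.mono' hucont.aestronglyMeasurable (Filter.Eventually.of_forall hule)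
  -- integrability of gₙ·φ
  set B : ℝ → ℝ := fun s => Cn * (W.w (-s) / (2 * Real.pi * |η|)) ^ n *
    ∑ k ∈ Finset.range (n + 1), ‖iteratedDeriv k (deriv f) s‖ with hBdef
  have hgnB : ∀ s, ‖g n s * φ s‖ ≤ B s := by
    intro s
    rw [norm_mul, hφnorm, mul_one]
    exact hCnbound (deriv f) hdf s x η hη
  have hBeq : ∀ s, B s = (Cn / (2 * Real.pi * |η|) ^ n) *
      ∑ k ∈ Finset.range (n + 1), W.w (-s) ^ n * ‖iteratedDeriv (k + 1) f s‖ := by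
    intro s
    simp only [hBdef]
    have h1 : ∑ k ∈ Finset.range (n + 1), ‖iteratedDeriv k (deriv f) s‖
        = ∑ k ∈ Finset.range (n + 1), ‖iteratedDeriv (k + 1) f s‖ :=
      Finset.sum_congr rfl fun k _ => by rw [iteratedDeriv_succ']
    rw [h1, ← Finset.mul_sum, div_pow]
    ring
  have hBint : Integrable B volume := by
    have h1 : Integrable (fun s => (Cn / (2 * Real.pi * |η|) ^ n) *
        ∑ k ∈ Finset.range (n + 1), W.w (-s) ^ n * ‖iteratedDeriv (k + 1) f s‖) volume := by
      refine Integrable.const_mul ?_ _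
      exact integrable_finset_sum _ (fun k hk => hint k (by
        have := Finset.mem_range.mp hk; omega))
    exact h1.congr (Filter.Eventually.of_forall fun s => (hBeq s).symm)
  have hgncont : Continuous (g n) := by
    have h1 := (props n le_rfl).1
    exact h1.continuous
  have hgnφ_int : Integrable (fun s => g n s * φ s) volume :=
    hBint.mono' (hgncont.mul hφcont).aestronglyMeasurable
      (Filter.Eventually.of_forall hgnB)
  -- boundary decay of G
  have hGten : Tendsto G (cocompact ℝ) (nhds 0) := by
    have part1 : Tendsto (fun s => f s * φ s) (cocompact ℝ) (nhds 0) := by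
      refine squeeze_zero_norm (fun s => ?_) (tendsto_zero_iff_norm_tendsto_zero.mp hfC0)
      rw [norm_mul, hφnorm, mul_one]
    have part2 : ∀ k, k < n → Tendsto (fun s => d k s * φ s) (cocompact ℝ) (nhds 0) := by
      intro k hk
      obtain ⟨hks, E, hE0, hEb⟩ := props k hk.le
      have hb : ∀ s, ‖d k s * φ s‖ ≤ (E * C * (W.w x)⁻¹) *
          ∑ j ∈ Finset.range (k + 1), W.w (-s) ^ (k + 1) * ‖iteratedDeriv (j + 1) f s‖ := by
        intro s
        have e1 : ‖d k s * φ s‖ = ‖g k s‖ * (W.w (s + x))⁻¹ := by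
          rw [norm_mul, hφnorm, mul_one]
          have : d k s = g k s / ((W.w (s + x) : ℝ) : ℂ) := rfl
          rw [this, norm_div, Complex.norm_real, Real.norm_eq_abs,
            abs_of_pos (hpos _), div_eq_mul_inv]
        rw [e1]
        have e2 : ‖g k s‖ ≤ E * W.w (-s) ^ k *
            ∑ j ∈ Finset.range (k + 0 + 1), ‖iteratedDeriv (j + 1) f s‖ := by
          have := hEb 0 (by omega) s
          simpa using this
        calc ‖g k s‖ * (W.w (s + x))⁻¹
            ≤ (E * W.w (-s) ^ k *
                ∑ j ∈ Finset.range (k + 0 + 1), ‖iteratedDeriv (j + 1) f s‖) *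
              (C * W.w (-s) * (W.w x)⁻¹) := by
              refine mul_le_mul e2 (hinvw s) (inv_nonneg.mpr (hpos _).le) ?_
              exact mul_nonneg (mul_nonneg hE0 (pow_nonneg (hpos _).le k))
                (Finset.sum_nonneg fun j _ => norm_nonneg _)
          _ = (E * C * (W.w x)⁻¹) *
              ∑ j ∈ Finset.range (k + 1), W.w (-s) ^ (k + 1) * ‖iteratedDeriv (j + 1) f s‖ := by
              rw [← Finset.mul_sum]
              have : k + 0 + 1 = k + 1 := by omega
              rw [this, pow_succ]
              ring
      refine squeeze_zero_norm hb ?_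
      have hj : ∀ j ∈ Finset.range (k + 1),
          Tendsto (fun s => W.w (-s) ^ (k + 1) * ‖iteratedDeriv (j + 1) f s‖)
            (cocompact ℝ) (nhds 0) := by
        intro j hjm
        have hjk := Finset.mem_range.mp hjm
        have h := hfdC0 (k + 1) (by omega) j (by omega)
        have h2 := tendsto_zero_iff_norm_tendsto_zero.mp h
        refine h2.congr (fun s => ?_)
        rw [norm_smul, Real.norm_eq_abs, abs_of_nonneg (pow_nonneg (hpos _).le _)]
      have hsum0 := tendsto_finset_sum (Finset.range (k + 1)) hj
      have := hsum0.const_mul (E * C * (W.w x)⁻¹)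
      simpa using this
    have h2 : Tendsto (fun s => ∑ k ∈ Finset.range n, d k s * φ s) (cocompact ℝ) (nhds 0) := by
      have := tendsto_finset_sum (Finset.range n)
        (fun k hk => part2 k (Finset.mem_range.mp hk))
      simpa using this
    have h3 := h2.const_mul c
    have h4 := part1.add h3
    rw [hGdef]
    simpa using h4
  have hGtop : Tendsto G atTop (nhds 0) := by
    refine hGten.mono_left ?_
    rw [cocompact_eq_atBot_atTop]
    exact le_sup_right
  have hGbot : Tendsto G atBot (nhds 0) := by
    refine hGten.mono_left ?_
    rw [cocompact_eq_atBot_atTop]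
    exact le_sup_left
  -- FTC
  have hD_int : Integrable (fun s => g n s * φ s - β * u s) volume :=
    hgnφ_int.sub (hu_int.const_mul β)
  have hIic : ∫ s in Iic (0:ℝ), (g n s * φ s - β * u s) = G 0 - 0 :=
    integral_Iic_of_hasDerivAt_of_tendsto' (fun s _ => hGd s) hD_int.integrableOn hGbot
  have hIoi : ∫ s in Ioi (0:ℝ), (g n s * φ s - β * u s) = 0 - G 0 :=
    integral_Ioi_of_hasDerivAt_of_tendsto' (fun s _ => hGd s) hD_int.integrableOn hGtop
  have htot : ∫ s : ℝ, (g n s * φ s - β * u s) = 0 := by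
    rw [← intervalIntegral.integral_Iic_add_Ioi hD_int.integrableOn hD_int.integrableOn, hIic, hIoi]
    ring
  have heq : ∫ s : ℝ, u s = β⁻¹ * ∫ s : ℝ, g n s * φ s := by
    have hsub := integral_sub hgnφ_int (hu_int.const_mul β)
    rw [htot] at hsub
    have hmul : ∫ s : ℝ, β * u s = β * ∫ s : ℝ, u s := by
      simpa [smul_eq_mul] using integral_smul β u
    rw [hmul, hβdef] at hsub
    rw [hβdef]
    rw [eq_inv_mul_iff_mul_eq₀ (show (2 * (Real.pi : ℂ) * Complex.I * (η : ℂ)) ≠ 0 from hβ)]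
    linear_combination hsub
  -- final bounds
  have hP : (0:ℝ) < 2 * Real.pi * |η| :=
    mul_pos (mul_pos two_pos Real.pi_pos) (abs_pos.mpr hη)
  constructor
  · -- main stationary phase bound
    show ‖∫ s : ℝ, u s‖ ≤ _
    rw [heq, norm_mul, norm_inv, hβnorm]
    have hInorm : ‖∫ s : ℝ, g n s * φ s‖ ≤ (Cn / (2 * Real.pi * |η|) ^ n) *
        ∑ k ∈ Finset.range (n + 1),
          ∫ s : ℝ, W.w (-s) ^ n * ‖iteratedDeriv (k + 1) f s‖ := by
      calc ‖∫ s : ℝ, g n s * φ s‖ ≤ ∫ s : ℝ, ‖g n s * φ s‖ :=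
            norm_integral_le_integral_norm _
        _ ≤ ∫ s : ℝ, B s := integral_mono hgnφ_int.norm hBint hgnB
        _ = ∫ s : ℝ, (Cn / (2 * Real.pi * |η|) ^ n) *
              ∑ k ∈ Finset.range (n + 1), W.w (-s) ^ n * ‖iteratedDeriv (k + 1) f s‖ := by
            simp only [hBeq]
        _ = (Cn / (2 * Real.pi * |η|) ^ n) *
              ∫ s : ℝ, ∑ k ∈ Finset.range (n + 1),
                W.w (-s) ^ n * ‖iteratedDeriv (k + 1) f s‖ := integral_const_mul _ _
        _ = (Cn / (2 * Real.pi * |η|) ^ n) *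
              ∑ k ∈ Finset.range (n + 1),
                ∫ s : ℝ, W.w (-s) ^ n * ‖iteratedDeriv (k + 1) f s‖ := by
            rw [integral_finset_sum _ (fun k hk => hint k (by
              have := Finset.mem_range.mp hk; omega))]
    have hT : Cn * ∑ k ∈ Finset.range (n + 1),
        ∫ s : ℝ, W.w (-s) ^ n * ‖iteratedDeriv (k + 1) f s‖ ≤ ((n : ℝ) + 1) * cn := by
      rw [Finset.mul_sum]
      calc ∑ k ∈ Finset.range (n + 1),
            Cn * ∫ s : ℝ, W.w (-s) ^ n * ‖iteratedDeriv (k + 1) f s‖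
          ≤ ∑ k ∈ Finset.range (n + 1), cn :=
            Finset.sum_le_sum (fun k hk => hcn k (by
              have := Finset.mem_range.mp hk; omega))
        _ = ((n : ℝ) + 1) * cn := by
            rw [Finset.sum_const, Finset.card_range, nsmul_eq_mul]
            push_cast
            ring
    calc (2 * Real.pi * |η|)⁻¹ * ‖∫ s : ℝ, g n s * φ s‖
        ≤ (2 * Real.pi * |η|)⁻¹ * ((Cn / (2 * Real.pi * |η|) ^ n) *
            ∑ k ∈ Finset.range (n + 1),
              ∫ s : ℝ, W.w (-s) ^ n * ‖iteratedDeriv (k + 1) f s‖) :=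
          mul_le_mul_of_nonneg_left hInorm (inv_nonneg.mpr hP.le)
      _ = (2 * Real.pi * |η|)⁻¹ * ((Cn * ∑ k ∈ Finset.range (n + 1),
              ∫ s : ℝ, W.w (-s) ^ n * ‖iteratedDeriv (k + 1) f s‖) *
            ((2 * Real.pi * |η|) ^ n)⁻¹) := by
          rw [div_eq_mul_inv]
          ring
      _ ≤ (2 * Real.pi * |η|)⁻¹ * ((((n : ℝ) + 1) * cn) * ((2 * Real.pi * |η|) ^ n)⁻¹) := by
          refine mul_le_mul_of_nonneg_left ?_ (inv_nonneg.mpr hP.le)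
          exact mul_le_mul_of_nonneg_right hT (inv_nonneg.mpr (pow_pos hP n).le)
      _ = ((n : ℝ) + 1) * cn / (2 * Real.pi * |η|) ^ (n + 1) := by
          rw [pow_succ, div_eq_mul_inv, mul_inv]
          ring
  · -- crude L¹ bound
    show ‖∫ s : ℝ, u s‖ ≤ _
    calc ‖∫ s : ℝ, u s‖ ≤ ∫ s : ℝ, ‖u s‖ := norm_integral_le_integral_norm _
      _ ≤ ∫ s : ℝ, C * (W.w s * ‖f s‖) := integral_mono hu_int.norm hbound_int hule
      _ = C * ∫ s : ℝ, W.w s * ‖f s‖ := integral_const_mul _ _
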